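/- arXiv:2405.09088 — 3 statements merged into one kernel-verified Lean document; each statement's English description precedes it below -/
import Mathlib

section
/- Let X ⊆ E(M) be a set that is not cyclic, and let L* be the set of coloops of the restriction M|X. If X − L* is not a cyclic flat of M then γ_M(X) = γ_M(X − L*), and if X − L* is a cyclic flat of M then γ_M(X) = 0. -/
open Set Matroid
open scoped Classical

namespace Paper

variable {α : Type*}

/-- A circuit of a matroid: a minimal dependent set. -/
def Circuit (M : Matroid α) (C : Set α) : Prop :=
  M.Dep C ∧ ∀ D ⊂ C, M.Indep D

/-- A coloop: an element of the ground set lying in no circuit. -/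
def Coloop (M : Matroid α) (x : α) : Prop :=
  x ∈ M.E ∧ ∀ C, Circuit M C → x ∉ C

/-- The set of coloops of a matroid. -/
def coloops (M : Matroid α) : Set α := {x | Coloop M x}

/-- A cyclic set: a subset of the ground set each of whose elements lies in a
circuit contained in the set (equivalently, the restriction has no coloops). -/
def Cyclic (M : Matroid α) (X : Set α) : Prop :=
  X ⊆ M.E ∧ ∀ x ∈ X, ∃ C, Circuit M C ∧ C ⊆ X ∧ x ∈ C

/-- A cyclic flat: a cyclic set that is also a flat. -/
def CyclicFlat (M : Matroid α) (X : Set α) : Prop :=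
  Cyclic M X ∧ M.IsFlat X

/-- The rank of a set: the largest cardinality of an independent subset. -/
noncomputable def rk (M : Matroid α) (X : Set α) : ℕ :=
  sSup (Set.ncard '' {I | M.Indep I ∧ I ⊆ X})

/-- The nullity of a set: `n(X) = |X| − r(X)`. -/
noncomputable def nullity (M : Matroid α) (X : Set α) : ℤ :=
  (X.ncard : ℤ) - rk M X

/-- Deletion of a single element: `M \ e`. -/
noncomputable def deleteElem (M : Matroid α) (e : α) : Matroid α :=
  M ↾ (M.E \ {e})

lemma circuit_restrict_iff {M : Matroid α} {X : Set α} (hX : X ⊆ M.E) {C : Set α} :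
    Circuit (M ↾ X) C ↔ Circuit M C ∧ C ⊆ X := by
  unfold Circuit
  simp only [restrict_dep_iff, Matroid.restrict_indep_iff, dep_iff]
  constructor
  · rintro ⟨⟨hd, hCX⟩, hmin⟩
    exact ⟨⟨⟨fun hi => hd ⟨hi, hCX⟩, hCX.trans hX⟩, fun D hD => (hmin D hD).1⟩, hCX⟩
  · rintro ⟨⟨⟨hd, _⟩, hmin⟩, hCX⟩
    exact ⟨⟨fun hi => hd hi.1, hCX⟩, fun D hD => ⟨hmin D hD, hD.subset.trans hCX⟩⟩

lemma exists_circuit_of_dep [Fintype α] (M : Matroid α) (D : Set α) (hD : M.Dep D) :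
    ∃ C, Circuit M C ∧ C ⊆ D := by
  have key : ∀ n (D : Set α), D.ncard ≤ n → M.Dep D → ∃ C, Circuit M C ∧ C ⊆ D := by
    intro n
    induction n with
    | zero =>
      intro D hcard hD
      have : D = ∅ := by
        rw [← Set.ncard_eq_zero (D.toFinite)]; omega
      exact absurd (this ▸ M.empty_indep) hD.not_indep
    | succ n ih =>
      intro D hcard hD
      by_cases h : ∀ D' ⊂ D, M.Indep D'
      · exact ⟨D, ⟨hD, h⟩, Subset.rfl⟩
      · push_neg at h
        obtain ⟨D', hss, hdep⟩ := h
        have hD' : M.Dep D' := ⟨hdep, hss.subset.trans hD.subset_ground⟩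
        obtain ⟨C, hC, hCD⟩ := ih D'
          (by have := Set.ncard_lt_ncard hss (D.toFinite); omega) hD'
        exact ⟨C, hC, hCD.trans hss.subset⟩
  exact key D.ncard D le_rfl hD

lemma Coloop.mem_of_base [Fintype α] {M : Matroid α} {x : α} (h : Coloop M x) {B : Set α}
    (hB : M.IsBase B) : x ∈ B := by
  by_contra hx
  obtain ⟨C, hC, hCB⟩ := exists_circuit_of_dep M _ (hB.insert_dep ⟨h.1, hx⟩)
  have hxC : x ∈ C := by
    by_contra hxc
    have hsub : C ⊆ B := fun y hy => ((hCB hy).resolve_left (by rintro rfl; exact hxc hy))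
    exact hC.1.not_indep (hB.indep.subset hsub)
  exact h.2 C hC hxC


lemma rk_eq_ncard_of_basis [Fintype α] {M : Matroid α} {I X : Set α} (h : M.IsBasis I X) :
    rk M X = I.ncard := by
  have hmem : I.ncard ∈ Set.ncard '' {I | M.Indep I ∧ I ⊆ X} := ⟨I, ⟨h.indep, h.subset⟩, rfl⟩
  apply le_antisymm
  · apply csSup_le ⟨I.ncard, hmem⟩
    rintro n ⟨J, ⟨hJ, hJX⟩, rfl⟩
    obtain ⟨I', hI', hJI'⟩ := hJ.subset_isBasis_of_subset hJX h.subset_ground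
    have hcard : I'.encard = I.encard :=
      (hI'.restrict_isBase).encard_eq_encard_of_isBase (h.restrict_isBase)
    have : I'.ncard = I.ncard := by rw [Set.ncard_def, hcard, ← Set.ncard_def]
    rw [← this]
    exact Set.ncard_le_ncard hJI' I'.toFinite
  · refine le_csSup ⟨Fintype.card α, ?_⟩ hmem
    rintro n ⟨J, _, rfl⟩
    have := Set.ncard_le_ncard (Set.subset_univ J) Set.finite_univ
    simpa [Set.ncard_univ] using this

lemma coloops_subset {M : Matroid α} {X : Set α} : coloops (M ↾ X) ⊆ X := by
  intro x hx
  simpa using hx.1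

lemma key_basis [Fintype α] {M : Matroid α} {X L I : Set α} (hX : X ⊆ M.E)
    (hL : L = coloops (M ↾ X)) (hI : M.IsBasis I X) :
    L ⊆ I ∧ M.IsBasis (I \ L) (X \ L) := by
  have hLI : L ⊆ I := by
    intro x hx
    have hco : Coloop (M ↾ X) x := by rw [hL] at hx; exact hx
    exact hco.mem_of_base hI.restrict_isBase
  refine ⟨hLI, (hI.indep.diff L).isBasis_of_subset_of_subset_closure
    (diff_subset_diff_left hI.subset) ?_⟩
  rintro x ⟨hxX, hxL⟩
  by_cases hxI : x ∈ I
  · exact M.subset_closure (I \ L) ((hI.indep.diff L).subset_ground) ⟨hxI, hxL⟩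
  · obtain ⟨C, hC, hCsub⟩ := exists_circuit_of_dep M _ (hI.insert_dep ⟨hxX, hxI⟩)
    have hxC : x ∈ C := by
      by_contra hxc
      have hsub : C ⊆ I := fun y hy => ((hCsub hy).resolve_left (by rintro rfl; exact hxc hy))
      exact hC.1.not_indep (hI.indep.subset hsub)
    have hCX : C ⊆ X := hCsub.trans (insert_subset hxX hI.subset)
    have hCL : ∀ y ∈ C, y ∉ L := by
      intro y hy hyL
      have hco : Coloop (M ↾ X) y := by rw [hL] at hyL; exact hyL
      exact hco.2 C ((circuit_restrict_iff hX).2 ⟨hC, hCX⟩) hy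
    have hCdx : C \ {x} ⊆ I \ L := by
      rintro y ⟨hyC, hyx⟩
      exact ⟨(hCsub hyC).resolve_left hyx, hCL y hyC⟩
    have hind : M.Indep (C \ {x}) :=
      hC.2 _ ⟨diff_subset, fun h => (h hxC).2 rfl⟩
    have hxcl : x ∈ M.closure (C \ {x}) := by
      rw [hind.mem_closure_iff_of_notMem (by simp)]
      rw [insert_diff_singleton, insert_eq_of_mem hxC]
      exact hC.1
    exact M.closure_subset_closure hCdx hxcl

lemma nullity_diff_coloops [Fintype α] {M : Matroid α} {X L : Set α} (hX : X ⊆ M.E)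
    (hL : L = coloops (M ↾ X)) : nullity M X = nullity M (X \ L) := by
  obtain ⟨I, hI⟩ := M.exists_isBasis X hX
  obtain ⟨hLI, hI'⟩ := key_basis hX hL hI
  have hLX : L ⊆ X := hL ▸ coloops_subset
  have h1 : rk M X = I.ncard := rk_eq_ncard_of_basis hI
  have h2 : rk M (X \ L) = (I \ L).ncard := rk_eq_ncard_of_basis hI'
  have h3 : (X \ L).ncard + L.ncard = X.ncard :=
    Set.ncard_diff_add_ncard_of_subset hLX X.toFinite
  have h4 : (I \ L).ncard + L.ncard = I.ncard :=
    Set.ncard_diff_add_ncard_of_subset hLI I.toFinite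
  unfold nullity
  rw [h1, h2]
  omega

lemma exists_coloop_of_not_cyclic {M : Matroid α} {X : Set α} (hX : X ⊆ M.E)
    (h : ¬ Cyclic M X) : ∃ x ∈ X, Coloop (M ↾ X) x := by
  unfold Cyclic at h
  push_neg at h
  obtain ⟨x, hxX, hx⟩ := h hX
  refine ⟨x, hxX, ⟨by simpa using hxX, ?_⟩⟩
  intro C hC hxC
  rw [circuit_restrict_iff hX] at hC
  exact (hx C hC.1 hC.2) hxC

lemma cyclic_disjoint_coloops {M : Matroid α} {X Z : Set α} (hX : X ⊆ M.E)
    (hZ : Cyclic M Z) (hZX : Z ⊆ X) {x : α} (hx : x ∈ Z) : ¬ Coloop (M ↾ X) x := by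
  intro hco
  obtain ⟨C, hC, hCZ, hxC⟩ := hZ.2 x hx
  exact hco.2 C ((circuit_restrict_iff hX).2 ⟨hC, hCZ.trans hZX⟩) hxC

variable [Fintype α] [DecidableEq α]

/-- The `γ` function: `γ_M(X) = n(X) − Σ_{Z ∈ Z(M), Z ⊊ X} γ_M(Z)`. -/
noncomputable def gamma (M : Matroid α) (X : Finset α) : ℤ :=
  nullity M ↑X -
    ∑ Z ∈ (Finset.univ.filter (fun Z : Finset α => CyclicFlat M ↑Z ∧ Z ⊂ X)).attach,
      gamma M Z.1
termination_by X.card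
decreasing_by
  exact Finset.card_lt_card (Finset.mem_filter.mp Z.2).2.2

lemma gamma_def (M : Matroid α) (X : Finset α) :
    gamma M X = nullity M ↑X -
      ∑ Z ∈ Finset.univ.filter (fun Z : Finset α => CyclicFlat M ↑Z ∧ Z ⊂ X), gamma M Z := by
  rw [gamma, Finset.sum_attach]

theorem statement_3 (M : Matroid α) (X : Finset α) (hX : ↑X ⊆ M.E)
    (hnc : ¬ Cyclic M ↑X) (L : Finset α) (hL : ↑L = coloops (M ↾ (↑X : Set α))) :
    (¬ CyclicFlat M ↑(X \ L) → gamma M X = gamma M (X \ L)) ∧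
    (CyclicFlat M ↑(X \ L) → gamma M X = 0) := by
  have hLX : L ⊆ X := by
    intro x hx
    have hx' : x ∈ coloops (M ↾ (↑X : Set α)) := by
      rw [← hL]; exact_mod_cast hx
    have := coloops_subset hx'
    exact_mod_cast this
  have hLne : L.Nonempty := by
    obtain ⟨x, hxX, hco⟩ := exists_coloop_of_not_cyclic hX hnc
    have : x ∈ (↑L : Set α) := by rw [hL]; exact hco
    exact ⟨x, by exact_mod_cast this⟩
  have hss : X \ L ⊂ X := Finset.sdiff_ssubset hLX hLne
  have hcoe : (↑(X \ L) : Set α) = ↑X \ ↑L := Finset.coe_sdiff X L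
  have hnull : nullity M ↑X = nullity M ↑(X \ L) := by
    rw [hcoe]; exact nullity_diff_coloops hX hL
  have hZsub : ∀ Z : Finset α, CyclicFlat M ↑Z → Z ⊂ X → Z ⊆ X \ L := by
    intro Z hZ hZX x hx
    rw [Finset.mem_sdiff]
    refine ⟨hZX.subset hx, fun hxL => ?_⟩
    have hco : Coloop (M ↾ (↑X : Set α)) x := by
      have hx' : x ∈ (↑L : Set α) := by exact_mod_cast hxL
      rw [hL] at hx'; exact hx'
    exact cyclic_disjoint_coloops hX hZ.1 (by exact_mod_cast hZX.subset)
      (by exact_mod_cast hx) hco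
  constructor
  · intro hncf
    have hfilt : Finset.univ.filter (fun Z : Finset α => CyclicFlat M ↑Z ∧ Z ⊂ X)
        = Finset.univ.filter (fun Z : Finset α => CyclicFlat M ↑Z ∧ Z ⊂ X \ L) := by
      apply Finset.filter_congr
      intro Z _
      constructor
      · rintro ⟨hZ, hZX⟩
        refine ⟨hZ, Finset.ssubset_iff_subset_ne.2 ⟨hZsub Z hZ hZX, ?_⟩⟩
        rintro rfl; exact hncf hZ
      · rintro ⟨hZ, hZX'⟩
        exact ⟨hZ, hZX'.trans_subset Finset.sdiff_subset⟩
    rw [gamma_def, gamma_def, hfilt, hnull]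
  · intro hcf
    have hnotmem : X \ L ∉ Finset.univ.filter
        (fun Z : Finset α => CyclicFlat M ↑Z ∧ Z ⊂ X \ L) := by
      intro h
      exact ssubset_irrefl _ (Finset.mem_filter.1 h).2.2
    have hfilt : Finset.univ.filter (fun Z : Finset α => CyclicFlat M ↑Z ∧ Z ⊂ X)
        = insert (X \ L)
          (Finset.univ.filter (fun Z : Finset α => CyclicFlat M ↑Z ∧ Z ⊂ X \ L)) := by
      ext Z
      simp only [Finset.mem_insert, Finset.mem_filter, Finset.mem_univ, true_and]
      constructor
      · rintro ⟨hZ, hZX⟩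
        rcases eq_or_ne Z (X \ L) with rfl | hne
        · exact Or.inl rfl
        · exact Or.inr ⟨hZ, Finset.ssubset_iff_subset_ne.2 ⟨hZsub Z hZ hZX, hne⟩⟩
      · rintro (rfl | ⟨hZ, hZX'⟩)
        · exact ⟨hcf, hss⟩
        · exact ⟨hZ, hZX'.trans_subset Finset.sdiff_subset⟩
    have expand := gamma_def M X
    rw [hfilt, Finset.sum_insert hnotmem] at expand
    have expand' := gamma_def M (X \ L)
    rw [expand, hnull, expand']
    ring

end Paper
end

section
/- If X is a flat of M that is not cyclic, then γ_M(X) = 0. -/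
open Set Matroid
open scoped Classical

namespace Paper

variable {α : Type*}

variable [Fintype α] [DecidableEq α]

lemma flat_of_closure_eq {M : Matroid α} {Y : Set α} (hY : M.closure Y = Y) : M.IsFlat Y := by
  refine ⟨fun I X hIY hIX => ?_, hY ▸ M.closure_subset_ground Y⟩
  have h := hIX.subset_closure
  rwa [hIY.closure_eq_closure, hY] at h

lemma exists_circuit_subset_aux (M : Matroid α) :
    ∀ n (D : Set α), D.ncard ≤ n → M.Dep D → ∃ C, Circuit M C ∧ C ⊆ D := by
  intro n
  induction n with
  | zero =>
    intro D hcard hdep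
    have : D = ∅ := (Set.ncard_eq_zero (Set.toFinite D)).mp (Nat.le_zero.mp hcard)
    subst this
    exact absurd M.empty_indep (dep_iff.mp hdep).1
  | succ n ih =>
    intro D hcard hdep
    by_cases h : ∀ D' ⊂ D, M.Indep D'
    · exact ⟨D, ⟨hdep, h⟩, subset_rfl⟩
    · push_neg at h
      obtain ⟨D', hss, hni⟩ := h
      have hdep' : M.Dep D' := (not_indep_iff (hss.subset.trans hdep.subset_ground)).mp hni
      have hlt : D'.ncard < D.ncard := Set.ncard_lt_ncard hss (Set.toFinite D)
      obtain ⟨C, hC, hCD⟩ := ih D' (by omega) hdep'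
      exact ⟨C, hC, hCD.trans hss.subset⟩

lemma exists_circuit_subset {M : Matroid α} {D : Set α} (hD : M.Dep D) :
    ∃ C, Circuit M C ∧ C ⊆ D :=
  exists_circuit_subset_aux M D.ncard D le_rfl hD

lemma fund_circuit {M : Matroid α} {I : Set α} {x : α} (hI : M.Indep I)
    (hxI : x ∉ I) (hx : x ∈ M.closure I) :
    ∃ C, Circuit M C ∧ C ⊆ insert x I ∧ x ∈ C := by
  have hdep : M.Dep (insert x I) := by
    rcases hI.mem_closure_iff.mp hx with h | h
    · exact h
    · exact absurd h hxI
  obtain ⟨C, hC, hCsub⟩ := exists_circuit_subset hdep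
  refine ⟨C, hC, hCsub, ?_⟩
  by_contra hxC
  have : C ⊆ I := fun y hy => by
    rcases hCsub hy with h | h
    · exact absurd (h ▸ hy) hxC
    · exact h
  exact (dep_iff.mp hC.1).1 (hI.subset this)

lemma rk_eq_ncard_basis {M : Matroid α} {B X : Set α} (hB : M.IsBasis B X) :
    rk M X = B.ncard := by
  have hbound : ∀ m ∈ Set.ncard '' {I | M.Indep I ∧ I ⊆ X}, m ≤ B.ncard := by
    rintro m ⟨I, ⟨hI, hIX⟩, rfl⟩
    obtain ⟨B', hB', hIB'⟩ := hI.subset_isBasis_of_subset hIX hB.subset_ground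
    have h1 : I.ncard ≤ B'.ncard := Set.ncard_le_ncard hIB' (Set.toFinite B')
    have h2 : B'.ncard = B.ncard := by
      have := hB'.encard_eq_encard hB
      simp [Set.ncard, this]
    omega
  refine le_antisymm (csSup_le ⟨B.ncard, B, ⟨hB.indep, hB.subset⟩, rfl⟩ hbound) ?_
  exact le_csSup ⟨B.ncard, hbound⟩ ⟨B, ⟨hB.indep, hB.subset⟩, rfl⟩

theorem statement_4 (M : Matroid α) (X : Finset α)
    (hflat : M.IsFlat ↑X) (hnc : ¬ Cyclic M ↑X) :
    gamma M X = 0 := by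
  have hXE : (X : Set α) ⊆ M.E := hflat.subset_ground
  set Y : Set α := {x | x ∈ (X : Set α) ∧ ∃ C, Circuit M C ∧ C ⊆ (X : Set α) ∧ x ∈ C}
    with hYdef
  have hYX : Y ⊆ (X : Set α) := fun x hx => hx.1
  have hYE : Y ⊆ M.E := hYX.trans hXE
  -- closure of Y is Y
  have hcl : M.closure Y = Y := by
    refine subset_antisymm ?_ (M.subset_closure Y hYE)
    intro e he
    have heX : e ∈ (X : Set α) := by
      have h := M.closure_subset_closure hYX
      rw [hflat.closure] at h
      exact h he
    obtain ⟨J, hJ⟩ := M.exists_isBasis Y hYE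
    by_cases heJ : e ∈ J
    · exact hJ.subset heJ
    · have heclJ : e ∈ M.closure J := by rwa [hJ.closure_eq_closure]
      obtain ⟨C, hC, hCsub, heC⟩ := fund_circuit hJ.indep heJ heclJ
      have hCX : C ⊆ (X : Set α) :=
        hCsub.trans (insert_subset heX (hJ.subset.trans hYX))
      exact ⟨heX, C, hC, hCX, heC⟩
  have hYflat : M.IsFlat Y := flat_of_closure_eq hcl
  have hYcyc : Cyclic M Y := by
    refine ⟨hYE, fun x hx => ?_⟩
    obtain ⟨hxX, C, hC, hCX, hxC⟩ := hx
    exact ⟨C, hC, fun y hy => ⟨hCX hy, C, hC, hCX, hy⟩, hxC⟩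
  -- Y is a proper subset of X
  have hYssX : Y ⊂ (X : Set α) := by
    refine ssubset_of_subset_of_ne hYX fun h => hnc ⟨hXE, fun x hx => ?_⟩
    rw [← h] at hx
    obtain ⟨-, C, hC, hCX, hxC⟩ := hx
    exact ⟨C, hC, hCX, hxC⟩
  -- rank/nullity computation
  obtain ⟨J, hJ⟩ := M.exists_isBasis Y hYE
  obtain ⟨I, hI, hJI⟩ := hJ.indep.subset_isBasis_of_subset (hJ.subset.trans hYX) hXE
  have claim1 : (X : Set α) \ Y ⊆ I := by
    rintro x ⟨hxX, hxY⟩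
    by_contra hxI
    obtain ⟨C, hC, hCsub, hxC⟩ := fund_circuit hI.indep hxI (hI.subset_closure hxX)
    exact hxY ⟨hxX, C, hC, hCsub.trans (insert_subset hxX hI.subset), hxC⟩
  have claim2 : I \ J ⊆ (X : Set α) \ Y := by
    rintro x ⟨hxI, hxJ⟩
    refine ⟨hI.subset hxI, fun hxY => ?_⟩
    have h1 : x ∈ M.closure J := hJ.subset_closure hxY
    have h2 : J ⊆ I \ {x} := subset_diff_singleton hJI hxJ
    exact hI.indep.notMem_closure_sdiff_of_mem hxI (M.closure_subset_closure h2 h1)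
  have hIeq : I = J ∪ ((X : Set α) \ Y) := by
    apply subset_antisymm
    · intro x hx
      by_cases hxJ : x ∈ J
      · exact Or.inl hxJ
      · exact Or.inr (claim2 ⟨hx, hxJ⟩)
    · exact union_subset hJI claim1
  have hdisj : Disjoint J ((X : Set α) \ Y) :=
    Set.disjoint_of_subset_left hJ.subset disjoint_sdiff_right
  have hIcard : I.ncard = J.ncard + ((X : Set α) \ Y).ncard := by
    rw [hIeq, Set.ncard_union_eq hdisj (Set.toFinite _) (Set.toFinite _)]
  have hXcard : ((X : Set α) \ Y).ncard + Y.ncard = (X : Set α).ncard :=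
    Set.ncard_diff_add_ncard_of_subset hYX (Set.toFinite _)
  have hrkX : rk M (X : Set α) = I.ncard := rk_eq_ncard_basis hI
  have hrkY : rk M Y = J.ncard := rk_eq_ncard_basis hJ
  have hnull : nullity M (X : Set α) = nullity M Y := by
    unfold nullity
    rw [hrkX, hrkY, hIcard, ← hXcard]
    push_cast
    ring
  -- Finset bookkeeping
  set YF : Finset α := (Set.toFinite Y).toFinset with hYFdef
  have hYF : (YF : Set α) = Y := Set.Finite.coe_toFinset _
  have hYFcf : CyclicFlat M (YF : Set α) := by rw [hYF]; exact ⟨hYcyc, hYflat⟩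
  have hYFX : YF ⊂ X := by
    rw [← Finset.coe_ssubset, hYF]
    exact hYssX
  have hsetEq : (Finset.univ.filter (fun Z : Finset α => CyclicFlat M ↑Z ∧ Z ⊂ X)) =
      insert YF (Finset.univ.filter (fun Z : Finset α => CyclicFlat M ↑Z ∧ Z ⊂ YF)) := by
    ext Z
    simp only [Finset.mem_filter, Finset.mem_univ, true_and, Finset.mem_insert]
    constructor
    · rintro ⟨hZcf, hZX⟩
      have hZY : (Z : Set α) ⊆ Y := by
        intro x hx
        obtain ⟨C, hC, hCZ, hxC⟩ := hZcf.1.2 x hx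
        have hZsubX : (Z : Set α) ⊆ (X : Set α) := Finset.coe_subset.mpr hZX.subset
        exact ⟨hZsubX hx, C, hC, hCZ.trans hZsubX, hxC⟩
      have hZYF : Z ⊆ YF := by
        rw [← Finset.coe_subset, hYF]
        exact hZY
      by_cases hEq : Z = YF
      · exact Or.inl hEq
      · exact Or.inr ⟨hZcf, ssubset_of_subset_of_ne hZYF hEq⟩
    · rintro (rfl | ⟨hZcf, hZY⟩)
      · exact ⟨hYFcf, hYFX⟩
      · exact ⟨hZcf, hZY.trans hYFX⟩
  have hnotmem : YF ∉ (Finset.univ.filter (fun Z : Finset α => CyclicFlat M ↑Z ∧ Z ⊂ YF)) := by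
    simp only [Finset.mem_filter]
    rintro ⟨-, -, h⟩
    exact (lt_irrefl _ h)
  have hgX : gamma M X = nullity M (X : Set α) -
      ∑ Z ∈ (Finset.univ.filter (fun Z : Finset α => CyclicFlat M ↑Z ∧ Z ⊂ X)), gamma M Z := by
    rw [gamma, Finset.sum_attach]
  have hgY : gamma M YF = nullity M (YF : Set α) -
      ∑ Z ∈ (Finset.univ.filter (fun Z : Finset α => CyclicFlat M ↑Z ∧ Z ⊂ YF)), gamma M Z := by
    rw [gamma, Finset.sum_attach]
  rw [hgX, hsetEq, Finset.sum_insert hnotmem, hgY, hYF, hnull]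
  ring

end Paper
end

section
/- Let X ⊆ E(M⁺) be a cyclic set of M⁺ with e ∈ X. Then γ_{M⁺}(X) − γ_M(X − e) − 1 = Σ_{Z ∈ Z(M⁺), Z ⊊ X} ( γ_M(Z − e) − γ_{M⁺}(Z) ), where the sum ranges over all cyclic flats Z of M⁺ properly contained in X. -/
open Set Matroid
open scoped Classical

namespace Paper

variable {α : Type*}

variable [Fintype α] [DecidableEq α]

/-! ### Auxiliary lemmas -/

section Aux

variable {N M : Matroid α} {C D I J W Y R : Set α} {x e : α}

lemma closure_flat' (N : Matroid α) (X : Set α) : N.IsFlat (N.closure X) := by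
  rw [Matroid.closure_def]
  have hne : Nonempty ({F | N.IsFlat F ∧ X ∩ N.E ⊆ F} : Set (Set α)) :=
    ⟨⟨N.E, N.ground_isFlat, inter_subset_right⟩⟩
  rw [sInter_eq_iInter]
  exact Matroid.IsFlat.iInter (fun F => F.2.1)

lemma flat_of_closure_eq_s11 {F : Set α} (h : N.closure F = F) : N.IsFlat F :=
  h ▸ closure_flat' N F

lemma exists_circuit_subset_s11 (hD : N.Dep D) : ∃ C, Circuit N C ∧ C ⊆ D := by
  have key : ∀ n (D : Set α), D.ncard ≤ n → N.Dep D → ∃ C, Circuit N C ∧ C ⊆ D := by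
    intro n
    induction n with
    | zero =>
      intro D hc hD
      have hDe : D = ∅ := (Set.ncard_eq_zero (Set.toFinite D)).1 (Nat.le_zero.1 hc)
      exact absurd N.empty_indep (hDe ▸ hD.not_indep)
    | succ n IH =>
      intro D hc hD
      by_cases h : ∀ D' ⊂ D, N.Indep D'
      · exact ⟨D, ⟨hD, h⟩, Subset.rfl⟩
      · push_neg at h
        obtain ⟨D', hsub, hdep⟩ := h
        have hD' : N.Dep D' := (N.dep_iff).2 ⟨hdep, hsub.subset.trans hD.subset_ground⟩
        obtain ⟨C, hC, hCD'⟩ := IH D'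
          (by have := Set.ncard_lt_ncard hsub (Set.toFinite D); omega) hD'
        exact ⟨C, hC, hCD'.trans hsub.subset⟩
  exact key D.ncard D le_rfl hD

lemma mem_closure_exists_circuit (hx : x ∈ N.closure Y) (hxY : x ∉ Y) (hY : Y ⊆ N.E) :
    ∃ C, Circuit N C ∧ x ∈ C ∧ C ⊆ insert x Y := by
  obtain ⟨I, hI⟩ := N.exists_isBasis Y hY
  have hxI : x ∉ I := fun h => hxY (hI.subset h)
  have hdep : N.Dep (insert x I) := by
    rw [← hI.indep.mem_closure_iff_of_notMem hxI, hI.closure_eq_closure]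
    exact hx
  obtain ⟨C, hC, hCsub⟩ := exists_circuit_subset_s11 hdep
  refine ⟨C, hC, ?_, hCsub.trans (insert_subset_insert hI.subset)⟩
  by_contra hxC
  have hCI : C ⊆ I := fun c hc => ((hCsub hc).resolve_left (by rintro rfl; exact hxC hc))
  exact hC.1.not_indep (hI.indep.subset hCI)

lemma circuit_mem_closure_diff (hC : Circuit N C) (heC : x ∈ C) :
    x ∈ N.closure (C \ {x}) := by
  have hss : C \ {x} ⊂ C := Set.sdiff_singleton_ssubset.2 heC
  have hind := hC.2 _ hss
  rw [hind.mem_closure_iff_of_notMem (by simp), Set.insert_diff_singleton,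
    Set.insert_eq_of_mem heC]
  exact hC.1

lemma rk_eq_ncard_of_basis_s11 (hI : N.IsBasis I Y) : rk N Y = I.ncard := by
  have hub : ∀ m ∈ Set.ncard '' {J | N.Indep J ∧ J ⊆ Y}, m ≤ I.ncard := by
    rintro m ⟨J, ⟨hJ, hJY⟩, rfl⟩
    obtain ⟨J', hJ', hJJ'⟩ := hJ.subset_isBasis_of_subset hJY hI.subset_ground
    have hcard : J'.encard = I.encard := hJ'.encard_eq_encard hI
    have h1 : J.ncard ≤ J'.ncard := Set.ncard_le_ncard hJJ' (Set.toFinite J')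
    have h2 : J'.ncard = I.ncard := by rw [Set.ncard_def, hcard, ← Set.ncard_def]
    omega
  refine le_antisymm (csSup_le ⟨I.ncard, ⟨I, ⟨hI.indep, hI.subset⟩, rfl⟩⟩ hub) ?_
  exact le_csSup ⟨I.ncard, hub⟩ ⟨I, ⟨hI.indep, hI.subset⟩, rfl⟩

lemma rk_restrict (hYR : Y ⊆ R) (hRE : R ⊆ M.E) : rk (M ↾ R) Y = rk M Y := by
  have hset : {I | (M ↾ R).Indep I ∧ I ⊆ Y} = {I | M.Indep I ∧ I ⊆ Y} := by
    ext I
    simp only [Matroid.restrict_indep_iff, mem_setOf_eq]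
    exact ⟨fun h => ⟨h.1.1, h.2⟩, fun h => ⟨⟨h.1, h.2.trans hYR⟩, h.2⟩⟩
  rw [rk, rk, hset]

lemma rk_diff_singleton (hY : Y ⊆ N.E) (he : x ∈ N.closure (Y \ {x})) :
    rk N Y = rk N (Y \ {x}) := by
  obtain ⟨I, hI⟩ := N.exists_isBasis (Y \ {x}) (diff_subset.trans hY)
  have hIY : N.IsBasis I Y := by
    refine hI.indep.isBasis_of_subset_of_subset_closure (hI.subset.trans diff_subset)
      (fun y hy => ?_)
    rcases eq_or_ne y x with rfl | hne
    · rw [hI.closure_eq_closure]; exact he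
    · exact hI.subset_closure ⟨hy, hne⟩
  rw [rk_eq_ncard_of_basis_s11 hIY, rk_eq_ncard_of_basis_s11 hI]

lemma rk_add_of_circuits (hWY : W ⊆ Y) (hYE : Y ⊆ N.E)
    (hcirc : ∀ C, Circuit N C → C ⊆ Y → C ⊆ W) :
    rk N Y = rk N W + (Y \ W).ncard := by
  obtain ⟨I, hI⟩ := N.exists_isBasis W (hWY.trans hYE)
  have hJsub : I ∪ (Y \ W) ⊆ N.E := union_subset (hI.subset.trans (hWY.trans hYE))
    (diff_subset.trans hYE)
  have hJindep : N.Indep (I ∪ (Y \ W)) := by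
    by_contra hcon
    have hdep : N.Dep (I ∪ (Y \ W)) := (N.dep_iff).2 ⟨hcon, hJsub⟩
    obtain ⟨C, hC, hCsub⟩ := exists_circuit_subset_s11 hdep
    have hCY : C ⊆ Y := hCsub.trans (union_subset (hI.subset.trans hWY) diff_subset)
    have hCW : C ⊆ W := hcirc C hC hCY
    have hCI : C ⊆ I := fun c hc => (hCsub hc).resolve_right (fun h => h.2 (hCW hc))
    exact hC.1.not_indep (hI.indep.subset hCI)
  have hJ : N.IsBasis (I ∪ (Y \ W)) Y := by
    refine hJindep.isBasis_of_subset_of_subset_closure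
      (union_subset (hI.subset.trans hWY) diff_subset) (fun y hy => ?_)
    by_cases hyW : y ∈ W
    · exact N.closure_subset_closure subset_union_left (hI.subset_closure hyW)
    · exact N.subset_closure _ hJindep.subset_ground (mem_union_right _ ⟨hy, hyW⟩)
  rw [rk_eq_ncard_of_basis_s11 hJ, rk_eq_ncard_of_basis_s11 hI,
    Set.ncard_union_eq (disjoint_of_subset_left hI.subset disjoint_sdiff_right)
      (Set.toFinite I) (Set.toFinite _)]

lemma nullity_eq_of_circuits (hWY : W ⊆ Y) (hYE : Y ⊆ N.E)
    (hcirc : ∀ C, Circuit N C → C ⊆ Y → C ⊆ W) :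
    nullity N Y = nullity N W := by
  have hr := rk_add_of_circuits hWY hYE hcirc
  have hcard : (Y \ W).ncard + W.ncard = Y.ncard :=
    Set.ncard_diff_add_ncard_of_subset hWY (Set.toFinite Y)
  unfold nullity
  rw [hr]
  push_cast
  omega

lemma restrict_circuit_iff (hRE : R ⊆ M.E) :
    Circuit (M ↾ R) C ↔ Circuit M C ∧ C ⊆ R := by
  constructor
  · rintro ⟨hdep, hmin⟩
    rw [Matroid.restrict_dep_iff] at hdep
    exact ⟨⟨(M.dep_iff).2 ⟨hdep.1, hdep.2.trans hRE⟩, fun D hD => (hmin D hD).of_restrict⟩,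
      hdep.2⟩
  · rintro ⟨⟨hdep, hmin⟩, hCR⟩
    exact ⟨Matroid.restrict_dep_iff.2 ⟨hdep.not_indep, hCR⟩,
      fun D hD => (hmin D hD).indep_restrict_of_subset (hD.subset.trans hCR)⟩

lemma restrict_closure_eq' (hYR : Y ⊆ R) (hRE : R ⊆ M.E) :
    (M ↾ R).closure Y = M.closure Y ∩ R := by
  obtain ⟨I, hI⟩ := M.exists_isBasis Y (hYR.trans hRE)
  have hIR : (M ↾ R).IsBasis I Y := hI.isBasis_restrict_of_subset hYR
  have hIRs : I ⊆ R := hI.subset.trans hYR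
  rw [← hI.closure_eq_closure, ← hIR.closure_eq_closure]
  ext x
  constructor
  · intro hx
    have hxR : x ∈ R := Matroid.mem_ground_of_mem_closure hx
    refine ⟨?_, hxR⟩
    by_cases hxI : x ∈ I
    · exact M.subset_closure I hI.indep.subset_ground hxI
    · have hdep := (hIR.indep.mem_closure_iff_of_notMem hxI).1 hx
      rw [Matroid.restrict_dep_iff] at hdep
      exact (hI.indep.mem_closure_iff_of_notMem hxI).2
        ((M.dep_iff).2 ⟨hdep.1, hdep.2.trans hRE⟩)
  · rintro ⟨hx, hxR⟩
    by_cases hxI : x ∈ I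
    · exact (M ↾ R).subset_closure I hIR.indep.subset_ground hxI
    · have hdep := (hI.indep.mem_closure_iff_of_notMem hxI).1 hx
      exact (hIR.indep.mem_closure_iff_of_notMem hxI).2
        (Matroid.restrict_dep_iff.2 ⟨hdep.not_indep, insert_subset hxR hIRs⟩)

lemma gamma_eq (N : Matroid α) (X : Finset α) :
    gamma N X = nullity N ↑X -
      ∑ Z ∈ Finset.univ.filter (fun Z : Finset α => CyclicFlat N ↑Z ∧ Z ⊂ X), gamma N Z := by
  rw [gamma, Finset.sum_attach]

lemma gamma_eq_zero_of_flat_not_cyclic (N : Matroid α) (Y : Finset α)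
    (hflat : N.IsFlat ↑Y) (hnc : ¬ Cyclic N ↑Y) : gamma N Y = 0 := by
  have hYE : (↑Y : Set α) ⊆ N.E := hflat.subset_ground
  set W : Finset α := Y.filter (fun x => ∃ C, Circuit N C ∧ C ⊆ ↑Y ∧ x ∈ C) with hW
  have hWY : W ⊆ Y := Finset.filter_subset _ _
  have hcircW : ∀ C, Circuit N C → C ⊆ ↑Y → C ⊆ ↑W := by
    intro C hC hCY x hx
    rw [Finset.mem_coe, hW, Finset.mem_filter]
    exact ⟨Finset.mem_coe.1 (hCY hx), C, hC, hCY, hx⟩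
  have hWcyc : Cyclic N ↑W := by
    refine ⟨(Finset.coe_subset.2 hWY).trans hYE, fun x hx => ?_⟩
    rw [Finset.mem_coe, hW, Finset.mem_filter] at hx
    obtain ⟨hxY, C, hC, hCY, hxC⟩ := hx
    exact ⟨C, hC, hcircW C hC hCY, hxC⟩
  have hWflat : N.IsFlat ↑W := by
    apply flat_of_closure_eq_s11
    refine subset_antisymm ?_ (N.subset_closure _ hWcyc.1)
    intro x hx
    by_cases hxW : x ∈ (↑W : Set α)
    · exact hxW
    · have hxY : x ∈ (↑Y : Set α) := by
        have hsub : N.closure ↑W ⊆ N.closure ↑Y :=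
          N.closure_subset_closure (Finset.coe_subset.2 hWY)
        rw [hflat.closure] at hsub
        exact hsub hx
      obtain ⟨C, hC, hxC, hCsub⟩ := mem_closure_exists_circuit hx hxW hWcyc.1
      have hCY : C ⊆ ↑Y := hCsub.trans
        (insert_subset hxY ((Finset.coe_subset.2 hWY)))
      exact absurd (hcircW C hC hCY hxC) hxW
  have hWss : W ⊂ Y := by
    refine Finset.ssubset_iff_subset_ne.2 ⟨hWY, fun h => hnc ?_⟩
    rw [← h]
    exact hWcyc
  have hfilter : Finset.univ.filter (fun Z : Finset α => CyclicFlat N ↑Z ∧ Z ⊂ Y)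
      = insert W (Finset.univ.filter (fun Z : Finset α => CyclicFlat N ↑Z ∧ Z ⊂ W)) := by
    ext Z
    simp only [Finset.mem_filter, Finset.mem_univ, true_and, Finset.mem_insert]
    constructor
    · rintro ⟨hZ, hZY⟩
      have hZW : Z ⊆ W := by
        intro x hxZ
        rw [hW, Finset.mem_filter]
        obtain ⟨C, hC, hCZ, hxC⟩ := hZ.1.2 x (Finset.mem_coe.2 hxZ)
        exact ⟨hZY.subset hxZ, C, hC, hCZ.trans (Finset.coe_subset.2 hZY.subset), hxC⟩
      rcases eq_or_ne Z W with rfl | hne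
      · exact Or.inl rfl
      · exact Or.inr ⟨hZ, Finset.ssubset_iff_subset_ne.2 ⟨hZW, hne⟩⟩
    · rintro (rfl | ⟨hZ, hZW⟩)
      · exact ⟨⟨hWcyc, hWflat⟩, hWss⟩
      · exact ⟨hZ, hZW.trans hWss⟩
  have hWnotmem : W ∉ Finset.univ.filter (fun Z : Finset α => CyclicFlat N ↑Z ∧ Z ⊂ W) := by
    simp only [Finset.mem_filter, Finset.mem_univ, true_and, not_and]
    exact fun _ h => (Finset.ssubset_iff_subset_ne.1 h).2 rfl
  have hnull : nullity N ↑Y = nullity N ↑W :=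
    nullity_eq_of_circuits (Finset.coe_subset.2 hWY) hYE hcircW
  rw [gamma_eq, hfilter, Finset.sum_insert hWnotmem, gamma_eq N W, hnull]
  ring

end Aux


lemma erase_step (M : Matroid α) (e : α) {X Z : Finset α} (heX : e ∈ X)
    (hecl : e ∈ M.closure (↑X \ {e})) (hZ : CyclicFlat M ↑Z) (hZX : Z ⊂ X) :
    (deleteElem M e).IsFlat ↑(Z.erase e) ∧ Z.erase e ⊂ X.erase e := by
  obtain ⟨hZcyc, hZflat⟩ := hZ
  have hZE : (↑Z : Set α) ⊆ M.E := hZcyc.1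
  have hR : M.E \ {e} ⊆ M.E := diff_subset
  by_cases heZ : e ∈ Z
  · have h1 : M.closure (↑Z \ {e}) = ↑Z := by
      apply subset_antisymm
      · calc M.closure (↑Z \ {e}) ⊆ M.closure ↑Z := M.closure_subset_closure diff_subset
          _ = ↑Z := hZflat.closure
      · intro x hxZ
        rcases eq_or_ne x e with rfl | hne
        · obtain ⟨C, hC, hCZ, hxC⟩ := hZcyc.2 x hxZ
          exact M.closure_subset_closure (diff_subset_diff_left hCZ)
            (circuit_mem_closure_diff hC hxC)
        · exact M.subset_closure _ (diff_subset.trans hZE) ⟨hxZ, hne⟩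
    constructor
    · apply flat_of_closure_eq_s11
      rw [deleteElem, Finset.coe_erase, restrict_closure_eq' (diff_subset_diff_left hZE) hR, h1]
      ext x
      simp only [mem_inter_iff, mem_diff, mem_singleton_iff]
      exact ⟨fun h => ⟨h.1, h.2.2⟩, fun h => ⟨h.1, hZE h.1, h.2⟩⟩
    · refine Finset.ssubset_iff_subset_ne.2 ⟨Finset.erase_subset_erase e hZX.subset,
        fun hEq => ?_⟩
      have hZXeq : Z = X := by
        rw [← Finset.insert_erase heZ, hEq, Finset.insert_erase heX]
      exact (Finset.ssubset_iff_subset_ne.1 hZX).2 hZXeq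
  · have herase : Z.erase e = Z := Finset.erase_eq_of_notMem heZ
    have hZR : (↑Z : Set α) ⊆ M.E \ {e} :=
      subset_diff_singleton hZE (by simpa using heZ)
    rw [herase]
    constructor
    · apply flat_of_closure_eq_s11
      rw [deleteElem, restrict_closure_eq' hZR hR, hZflat.closure]
      exact inter_eq_left.2 hZR
    · refine Finset.ssubset_iff_subset_ne.2 ⟨?_, ?_⟩
      · intro x hx
        exact Finset.mem_erase.2 ⟨fun h => heZ (h ▸ hx), hZX.subset hx⟩
      · intro hEq
        apply heZ
        have h2 : (↑Z : Set α) = ↑X \ {e} := by rw [hEq, Finset.coe_erase]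
        have h3 : e ∈ (↑Z : Set α) := by rw [← hZflat.closure, h2]; exact hecl
        exact Finset.mem_coe.1 h3

lemma psi_step (M : Matroid α) (e : α) {X F : Finset α} (heX : e ∈ X)
    (hF : CyclicFlat (deleteElem M e) ↑F) (hFX : F ⊂ X.erase e) :
    CyclicFlat M ↑(if e ∈ M.closure ↑F then insert e F else F) ∧
      (if e ∈ M.closure ↑F then insert e F else F) ⊂ X ∧
      (if e ∈ M.closure ↑F then insert e F else F).erase e = F := by
  obtain ⟨hFcyc, hFflat⟩ := hF
  have hR : M.E \ {e} ⊆ M.E := diff_subset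
  have hFR : (↑F : Set α) ⊆ M.E \ {e} := hFcyc.1
  have hFE : (↑F : Set α) ⊆ M.E := hFR.trans hR
  have heF : e ∉ F := fun h => (hFR (Finset.mem_coe.2 h)).2 rfl
  have hclF : M.closure ↑F ∩ (M.E \ {e}) = ↑F := by
    have h0 := hFflat.closure
    rwa [deleteElem, restrict_closure_eq' hFR hR] at h0
  have hcirc : ∀ x ∈ (↑F : Set α), ∃ C, Circuit M C ∧ C ⊆ ↑F ∧ x ∈ C := by
    intro x hx
    obtain ⟨C, hC, hCF, hxC⟩ := hFcyc.2 x hx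
    rw [deleteElem, restrict_circuit_iff hR] at hC
    exact ⟨C, hC.1, hCF, hxC⟩
  by_cases hecl : e ∈ M.closure ↑F
  · simp only [if_pos hecl]
    have heE : e ∈ M.E := Matroid.mem_ground_of_mem_closure hecl
    have hclF2 : M.closure ↑F = insert e ↑F := by
      apply subset_antisymm
      · intro x hx
        rcases eq_or_ne x e with rfl | hne
        · exact mem_insert _ _
        · have hxE : x ∈ M.E := Matroid.mem_ground_of_mem_closure hx
          exact mem_insert_of_mem _ (by rw [← hclF]; exact ⟨hx, hxE, hne⟩)
      · exact insert_subset hecl (M.subset_closure ↑F hFE)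
    have hZflat : M.IsFlat ↑(insert e F) := by
      apply flat_of_closure_eq_s11
      rw [Finset.coe_insert]
      apply subset_antisymm
      · have h1 : insert e (↑F : Set α) ⊆ M.closure ↑F := by rw [hclF2]
        have h2 := M.closure_subset_closure_of_subset_closure h1
        rwa [hclF2] at h2
      · exact M.subset_closure _ (insert_subset heE hFE)
    have hZcyc : Cyclic M ↑(insert e F) := by
      rw [Finset.coe_insert]
      refine ⟨insert_subset heE hFE, fun x hx => ?_⟩
      rcases mem_insert_iff.1 hx with rfl | hxF
      · obtain ⟨C, hC, hxC, hCsub⟩ := mem_closure_exists_circuit hecl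
          (fun h => heF (Finset.mem_coe.1 h)) hFE
        exact ⟨C, hC, hCsub, hxC⟩
      · obtain ⟨C, hC, hCF, hxC⟩ := hcirc x hxF
        exact ⟨C, hC, hCF.trans (subset_insert _ _), hxC⟩
    refine ⟨⟨hZcyc, hZflat⟩, ?_, Finset.erase_insert heF⟩
    refine Finset.ssubset_iff_subset_ne.2
      ⟨Finset.insert_subset heX (hFX.subset.trans (Finset.erase_subset _ _)), fun hEq => ?_⟩
    obtain ⟨x, hxXe, hxF⟩ := Finset.exists_of_ssubset hFX
    have hxX : x ∈ X := Finset.mem_of_mem_erase hxXe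
    have hxe : x ≠ e := Finset.ne_of_mem_erase hxXe
    rw [← hEq] at hxX
    rcases Finset.mem_insert.1 hxX with rfl | h
    · exact hxe rfl
    · exact hxF h
  · simp only [if_neg hecl]
    have hclF3 : M.closure ↑F = ↑F := by
      apply subset_antisymm
      · intro x hx
        have hxE := Matroid.mem_ground_of_mem_closure hx
        have hne : x ≠ e := fun h => hecl (h ▸ hx)
        rw [← hclF]; exact ⟨hx, hxE, hne⟩
      · exact M.subset_closure ↑F hFE
    exact ⟨⟨⟨hFE, hcirc⟩, flat_of_closure_eq_s11 hclF3⟩,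
      hFX.trans (Finset.erase_ssubset heX), Finset.erase_eq_of_notMem heF⟩


theorem statement_11 (M : Matroid α) (e : α) (he : e ∈ M.E)
    (X : Finset α) (hX : ↑X ⊆ M.E) (hcyc : Cyclic M ↑X) (heX : e ∈ X) :
    gamma M X - gamma (deleteElem M e) (X.erase e) - 1 =
      ∑ Z ∈ Finset.univ.filter (fun Z : Finset α => CyclicFlat M ↑Z ∧ Z ⊂ X),
        (gamma (deleteElem M e) (Z.erase e) - gamma M Z) := by
  classical
  have hR : M.E \ {e} ⊆ M.E := diff_subset
  have heXc : e ∈ (↑X : Set α) := Finset.mem_coe.2 heX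
  obtain ⟨C0, hC0, hC0X, heC0⟩ := hcyc.2 e heXc
  have hecl : e ∈ M.closure (↑X \ {e}) :=
    M.closure_subset_closure (diff_subset_diff_left hC0X) (circuit_mem_closure_diff hC0 heC0)
  have hXe_sub : (↑X \ {e} : Set α) ⊆ M.E \ {e} := diff_subset_diff_left hX
  have hK1 : nullity M ↑X = nullity (deleteElem M e) ↑(X.erase e) + 1 := by
    have hrk1 : rk M ↑X = rk M (↑X \ {e}) := rk_diff_singleton hX hecl
    have hrk2 : rk (deleteElem M e) (↑X \ {e}) = rk M (↑X \ {e}) := rk_restrict hXe_sub hR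
    have hcard : (↑X \ {e} : Set α).ncard + 1 = (↑X : Set α).ncard :=
      Set.ncard_diff_singleton_add_one heXc (Set.toFinite _)
    rw [nullity, nullity, Finset.coe_erase, hrk1, deleteElem, rk_restrict hXe_sub hR]
    push_cast
    omega
  set A := Finset.univ.filter (fun Z : Finset α => CyclicFlat M ↑Z ∧ Z ⊂ X) with hA
  set B := Finset.univ.filter
      (fun F : Finset α => CyclicFlat (deleteElem M e) ↑F ∧ F ⊂ X.erase e) with hB
  have hK2 : ∑ Z ∈ A, gamma (deleteElem M e) (Z.erase e)
      = ∑ F ∈ B, gamma (deleteElem M e) F := by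
    rw [← Finset.sum_filter_add_sum_filter_not A
      (fun Z => Cyclic (deleteElem M e) ↑(Z.erase e))
      (fun Z => gamma (deleteElem M e) (Z.erase e))]
    have hzero : ∑ Z ∈ A.filter (fun Z => ¬ Cyclic (deleteElem M e) ↑(Z.erase e)),
        gamma (deleteElem M e) (Z.erase e) = 0 := by
      apply Finset.sum_eq_zero
      intro Z hZ
      rw [Finset.mem_filter] at hZ
      obtain ⟨hZA, hnc⟩ := hZ
      rw [hA, Finset.mem_filter] at hZA
      exact gamma_eq_zero_of_flat_not_cyclic _ _
        (erase_step M e heX hecl hZA.2.1 hZA.2.2).1 hnc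
    rw [hzero, add_zero]
    refine Finset.sum_bij' (fun Z _ => Z.erase e)
      (fun F _ => if e ∈ M.closure ↑F then insert e F else F) ?_ ?_ ?_ ?_ ?_
    · intro Z hZ
      rw [Finset.mem_filter] at hZ
      obtain ⟨hZA, hcycZ⟩ := hZ
      rw [hA, Finset.mem_filter] at hZA
      obtain ⟨hstep1, hstep2⟩ := erase_step M e heX hecl hZA.2.1 hZA.2.2
      rw [hB, Finset.mem_filter]
      exact ⟨Finset.mem_univ _, ⟨hcycZ, hstep1⟩, hstep2⟩
    · intro F hF
      rw [hB, Finset.mem_filter] at hF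
      obtain ⟨hcf, hpr, hers⟩ := psi_step M e heX hF.2.1 hF.2.2
      rw [Finset.mem_filter, hA, Finset.mem_filter]
      refine ⟨⟨Finset.mem_univ _, hcf, hpr⟩, ?_⟩
      rw [hers]
      exact hF.2.1.1
    · intro Z hZ
      rw [Finset.mem_filter, hA, Finset.mem_filter] at hZ
      obtain ⟨⟨-, ⟨hZcyc, hZflat⟩, -⟩, -⟩ := hZ
      show (if e ∈ M.closure ↑(Z.erase e) then insert e (Z.erase e) else Z.erase e) = Z
      by_cases heZ : e ∈ Z
      · have hecl' : e ∈ M.closure ↑(Z.erase e) := by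
          rw [Finset.coe_erase]
          obtain ⟨C, hC, hCZ, heC⟩ := hZcyc.2 e (Finset.mem_coe.2 heZ)
          exact M.closure_subset_closure (diff_subset_diff_left hCZ)
            (circuit_mem_closure_diff hC heC)
        rw [if_pos hecl', Finset.insert_erase heZ]
      · have hnot : e ∉ M.closure ↑(Z.erase e) := by
          rw [Finset.erase_eq_of_notMem heZ, hZflat.closure]
          simpa using heZ
        rw [if_neg hnot, Finset.erase_eq_of_notMem heZ]
    · intro F hF
      rw [hB, Finset.mem_filter] at hF
      exact (psi_step M e heX hF.2.1 hF.2.2).2.2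
    · intro Z hZ
      rfl
  have hK3 : gamma (deleteElem M e) (X.erase e) =
      nullity (deleteElem M e) ↑(X.erase e) - ∑ F ∈ B, gamma (deleteElem M e) F := by
    rw [gamma_eq, ← hB]
  rw [gamma_eq M X, ← hA, Finset.sum_sub_distrib, hK2, hK3, hK1]
  ring

end Paper
end
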